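/- arXiv:1703.04992 — 2 statements merged into one kernel-verified Lean document; each statement's English description precedes it below -/
import Mathlib

section
/- Let (Q, q) be a finite-dimensional quadratic space over F_2 (q : Q → F_2 with q(x+y)-q(x)-q(y) a bilinear form) whose bilinear form is non-degenerate, and suppose Q admits a maximal isotropic subspace of dimension (dim Q)/2. If U, U', U'' are three maximal isotropic subspaces of Q, then dim(U ∩ U') + dim(U' ∩ U'') + dim(U'' ∩ U) ≡ dim U (mod 2). -/
open Module

section Stmt1Development

open Submodule LinearMap

set_option linter.unusedSectionVars false
set_option maxHeartbeats 800000

universe u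

set_option linter.unusedSectionVars false
set_option maxHeartbeats 800000

namespace S1

lemma z2 : ∀ c : ZMod 2, c = 0 ∨ c = 1 := by decide

variable {Q : Type u} [AddCommGroup Q] [Module (ZMod 2) Q]

section mkB
variable (b : Q → Q → ZMod 2)
    (hbl : ∀ x₁ x₂ y, b (x₁ + x₂) y = b x₁ y + b x₂ y)
    (hbr : ∀ x y₁ y₂, b x (y₁ + y₂) = b x y₁ + b x y₂)

include hbl in
lemma b_zero_left (y : Q) : b 0 y = 0 := by
  have := hbl 0 0 y; simpa using this.symm

include hbr in
lemma b_zero_right (x : Q) : b x 0 = 0 := by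
  have := hbr x 0 0; simpa using this.symm

def mkB : LinearMap.BilinForm (ZMod 2) Q :=
  LinearMap.mk₂ (ZMod 2) b hbl
    (fun c x y => by
      rcases z2 c with rfl | rfl
      · simpa using b_zero_left b hbl y
      · simp)
    hbr
    (fun c x y => by
      rcases z2 c with rfl | rfl
      · simpa using b_zero_right b hbr x
      · simp)

@[simp] lemma mkB_apply (x y : Q) : mkB b hbl hbr x y = b x y := rfl

include hbl hbr in
lemma b_symm (halt : ∀ x, b x x = 0) (x y : Q) : b x y = b y x := by
  have h := halt (x + y)
  rw [hbl, hbr, hbr, halt, halt, zero_add, add_zero] at h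
  have : b x y = -(b y x) := by linear_combination h
  rw [this, CharTwo.neg_eq]

end mkB

/-- nondegenerate alternating form over `ZMod 2` has even-dimensional domain. -/
lemma alt_even : ∀ (n : ℕ) {V : Type u} [AddCommGroup V] [Module (ZMod 2) V]
    [FiniteDimensional (ZMod 2) V] (C : LinearMap.BilinForm (ZMod 2) V),
    finrank (ZMod 2) V = n → C.IsAlt → C.Nondegenerate → Even n := by
  intro n
  induction n using Nat.strong_induction_on with
  | _ n IHn =>
  intro V _ _ _ C hdim halt hnd
  rcases Nat.eq_zero_or_pos n with rfl | hpos
  · exact Even.zero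
  -- pick e ≠ 0
  have : Nontrivial V := by
    rw [← Module.finrank_pos_iff (R := ZMod 2)]; omega
  obtain ⟨e, he⟩ := exists_ne (0 : V)
  have hCe : ∃ f, C e f ≠ 0 := by
    by_contra h; push_neg at h
    exact he (hnd.1 e h)
  obtain ⟨f, hef⟩ := hCe
  have hfe : C f e ≠ 0 := by
    rw [← halt.neg_eq, neg_ne_zero] at hef; exact hef
  have hli : LinearIndependent (ZMod 2) ![e, f] := by
    rw [LinearIndependent.pair_iff]
    intro s t hst
    rcases z2 s with rfl | rfl <;> rcases z2 t with rfl | rfl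
    · exact ⟨rfl, rfl⟩
    · exfalso; apply hef
      have hf : f = 0 := by simpa using hst
      rw [hf]; simp
    · exfalso; apply hef
      have he0 : e = 0 := by simpa using hst
      rw [he0]; simp
    · exfalso; apply hef
      have hf : f = e := by
        have h0 : e + f = 0 := by simpa using hst
        have h1 : f = -e := eq_neg_of_add_eq_zero_right h0
        rw [h1, ← neg_one_smul (ZMod 2) e, show (-1 : ZMod 2) = 1 by decide, one_smul]
      rw [hf]; exact halt e
  set W : Submodule (ZMod 2) V := Submodule.span (ZMod 2) {e, f} with hW
  have hrange : Set.range ![e, f] = {e, f} := by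
    ext x; simp [Matrix.range_cons, Matrix.range_empty, or_comm]
  have hWdim : finrank (ZMod 2) W = 2 := by
    have h2 := finrank_span_eq_card (R := ZMod 2) hli
    rw [hrange] at h2
    simpa [hW] using h2
  have heW : e ∈ W := Submodule.subset_span (by simp)
  have hfW : f ∈ W := Submodule.subset_span (by simp)
  have hrestnd : (C.restrict W).Nondegenerate := by
    apply (LinearMap.IsRefl.nondegenerate_iff_separatingLeft (show (C.restrict W).IsAlt from fun x => halt x).isRefl).mpr
    rintro ⟨x, hx⟩ h
    obtain ⟨a, c, hac⟩ := Submodule.mem_span_pair.mp hx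
    have hxe : C x e = 0 := h ⟨e, heW⟩
    have hxf : C x f = 0 := h ⟨f, hfW⟩
    have hc : c = 0 := by
      rw [← hac] at hxe
      simp only [map_add, map_smul, LinearMap.add_apply, LinearMap.smul_apply,
        smul_eq_mul, halt e, mul_zero, zero_add] at hxe
      rcases mul_eq_zero.mp hxe with h' | h'
      · exact h'
      · exact absurd h' hfe
    have ha : a = 0 := by
      rw [← hac] at hxf
      simp only [map_add, map_smul, LinearMap.add_apply, LinearMap.smul_apply,
        smul_eq_mul, halt f, mul_zero, add_zero] at hxf
      rcases mul_eq_zero.mp hxf with h' | h'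
      · exact h'
      · exact absurd h' hef
    ext
    simp [← hac, ha, hc]
  have hcompl : IsCompl W (C.orthogonal W) :=
    C.isCompl_orthogonal_of_restrict_nondegenerate halt.isRefl hrestnd
  set O := C.orthogonal W with hO
  have hOdim : finrank (ZMod 2) O = n - 2 := by
    rw [hO, LinearMap.BilinForm.finrank_orthogonal hnd, hdim, hWdim]
  have hn2 : 2 ≤ n := by
    have := Submodule.finrank_le W
    omega
  have hOalt : (C.restrict O).IsAlt := fun x => halt x
  have hOnd : (C.restrict O).Nondegenerate := by
    apply (LinearMap.IsRefl.nondegenerate_iff_separatingLeft hOalt.isRefl).mpr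
    rintro ⟨x, hx⟩ h
    have hxO : ∀ y ∈ O, C x y = 0 := fun y hy => h ⟨y, hy⟩
    have hxW : ∀ w ∈ W, C x w = 0 := fun w hw => halt.isRefl _ _ (hx w hw)
    have hx0 : x = 0 := by
      apply hnd.1
      intro z
      have hz : z ∈ W ⊔ O := by rw [hcompl.sup_eq_top]; trivial
      obtain ⟨w, hw, o, ho, rfl⟩ := Submodule.mem_sup.mp hz
      rw [map_add, hxW w hw, hxO o ho, add_zero]
    ext; exact hx0
  have hIH := IHn (n - 2) (by omega) (C.restrict O) hOdim hOalt hOnd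
  rw [Nat.even_iff] at hIH ⊢
  omega

def P (m : ℕ) : Prop :=
  ∀ {Q : Type u} [AddCommGroup Q] [Module (ZMod 2) Q] [FiniteDimensional (ZMod 2) Q]
    (q : Q → ZMod 2) (b : Q → Q → ZMod 2),
    (∀ x y, b x y = q (x + y) - q x - q y) →
    (∀ x₁ x₂ y, b (x₁ + x₂) y = b x₁ y + b x₂ y) →
    (∀ x y₁ y₂, b x (y₁ + y₂) = b x y₁ + b x y₂) →
    (∀ x, b x x = 0) →
    (∀ x, (∀ y, b x y = 0) → x = 0) →
    Module.finrank (ZMod 2) Q = 2 * m →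
    ∀ U U' U'' : Submodule (ZMod 2) Q,
    (∀ x ∈ U, q x = 0) → finrank (ZMod 2) U = m →
    (∀ x ∈ U', q x = 0) → finrank (ZMod 2) U' = m →
    (∀ x ∈ U'', q x = 0) → finrank (ZMod 2) U'' = m →
    (finrank (ZMod 2) ↥(U ⊓ U') + finrank (ZMod 2) ↥(U' ⊓ U'') +
      finrank (ZMod 2) ↥(U'' ⊓ U)) % 2 = m % 2

section Lag

variable [FiniteDimensional (ZMod 2) Q]
  (q : Q → ZMod 2) (b : Q → Q → ZMod 2)
  (hb : ∀ x y, b x y = q (x + y) - q x - q y)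
  (hbl : ∀ x₁ x₂ y, b (x₁ + x₂) y = b x₁ y + b x₂ y)
  (hbr : ∀ x y₁ y₂, b x (y₁ + y₂) = b x y₁ + b x y₂)
  (halt : ∀ x, b x x = 0)
  (hnd : ∀ x, (∀ y, b x y = 0) → x = 0)
  {m : ℕ} (hQ : finrank (ZMod 2) Q = 2 * m)

include hb hbl hbr halt hnd hQ in
/-- a maximal isotropic subspace equals its orthogonal complement -/
lemma lag_orth (W : Submodule (ZMod 2) Q) (hW1 : ∀ x ∈ W, q x = 0)
    (hW2 : finrank (ZMod 2) W = m) :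
    (mkB b hbl hbr).orthogonal W = W := by
  set B := mkB b hbl hbr with hB
  have hrefl : B.IsRefl := fun x y h => by
    rw [hB, mkB_apply] at h ⊢
    rw [b_symm b hbl hbr halt]; exact h
  have hle : W ≤ B.orthogonal W := by
    intro x hx
    rw [LinearMap.BilinForm.mem_orthogonal_iff]
    intro n hn
    show B n x = 0
    rw [hB, mkB_apply, hb]
    rw [hW1 _ (W.add_mem hn hx), hW1 _ hn, hW1 _ hx]
    ring
  have hBnd : B.Nondegenerate := hrefl.nondegenerate_iff_separatingLeft.mpr fun x hx => hnd x hx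
  have hfr : finrank (ZMod 2) (B.orthogonal W) ≤ finrank (ZMod 2) W := by
    rw [LinearMap.BilinForm.finrank_orthogonal hBnd, hQ, hW2]
    omega
  exact (Submodule.eq_of_le_of_finrank_le hle hfr).symm

end Lag

lemma finrank_comap_subtype [FiniteDimensional (ZMod 2) Q] (V W : Submodule (ZMod 2) Q) :
    finrank (ZMod 2) (W.comap V.subtype) = finrank (ZMod 2) ↥(V ⊓ W) := by
  rw [← Submodule.map_comap_subtype]
  exact (Submodule.finrank_map_subtype_eq V _).symm

lemma finrank_map_mkQ [FiniteDimensional (ZMod 2) Q] (V : Submodule (ZMod 2) Q)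
    (Z S : Submodule (ZMod 2) ↥V) :
    finrank (ZMod 2) (S.map Z.mkQ) + finrank (ZMod 2) ↥(S ⊓ Z) = finrank (ZMod 2) S := by
  have h := LinearMap.finrank_range_add_finrank_ker (Z.mkQ ∘ₗ S.subtype)
  rw [LinearMap.range_comp, Submodule.range_subtype, LinearMap.ker_comp, Submodule.ker_mkQ,
    finrank_comap_subtype] at h
  exact h

lemma key (k : ℕ) (IH : P.{u} k) {Q : Type u} [AddCommGroup Q] [Module (ZMod 2) Q]
    [FiniteDimensional (ZMod 2) Q]
    (q : Q → ZMod 2) (b : Q → Q → ZMod 2)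
    (hb : ∀ x y, b x y = q (x + y) - q x - q y)
    (hbl : ∀ x₁ x₂ y, b (x₁ + x₂) y = b x₁ y + b x₂ y)
    (hbr : ∀ x y₁ y₂, b x (y₁ + y₂) = b x y₁ + b x y₂)
    (halt : ∀ x, b x x = 0)
    (hnd : ∀ x, (∀ y, b x y = 0) → x = 0)
    (hQ : finrank (ZMod 2) Q = 2 * (k + 1))
    (U U' U'' : Submodule (ZMod 2) Q)
    (hU1 : ∀ x ∈ U, q x = 0) (hU2 : finrank (ZMod 2) U = k + 1)
    (hU'1 : ∀ x ∈ U', q x = 0) (hU'2 : finrank (ZMod 2) U' = k + 1)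
    (hU''1 : ∀ x ∈ U'', q x = 0) (hU''2 : finrank (ZMod 2) U'' = k + 1)
    (v : Q) (hv0 : v ≠ 0) (hvU : v ∈ U) (hvU' : v ∈ U') :
    (finrank (ZMod 2) ↥(U ⊓ U') + finrank (ZMod 2) ↥(U' ⊓ U'') +
      finrank (ZMod 2) ↥(U'' ⊓ U)) % 2 = (k + 1) % 2 := by
  have hsym := b_symm b hbl hbr halt
  set B := mkB b hbl hbr with hB
  have hBapp : ∀ x y : Q, B x y = b x y := fun _ _ => rfl
  have hrefl : B.IsRefl := fun x y h => by
    rw [hBapp] at h ⊢; rw [hsym]; exact h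
  have hBnd : B.Nondegenerate := hrefl.nondegenerate_iff_separatingLeft.mpr fun x hx => hnd x hx
  have horthU : B.orthogonal U = U := lag_orth q b hb hbl hbr halt hnd hQ U hU1 hU2
  have horthU' : B.orthogonal U' = U' := lag_orth q b hb hbl hbr halt hnd hQ U' hU'1 hU'2
  have horthU'' : B.orthogonal U'' = U'' := lag_orth q b hb hbl hbr halt hnd hQ U'' hU''1 hU''2
  have hqv : q v = 0 := hU1 v hvU
  set V := LinearMap.ker (B v) with hV
  have hmemV : ∀ x : Q, x ∈ V ↔ b v x = 0 := fun x => by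
    rw [hV, LinearMap.mem_ker, hBapp]
  have hvV : v ∈ V := (hmemV v).mpr (halt v)
  have hVdim : finrank (ZMod 2) V = 2 * k + 1 := by
    have hy : ∃ y, b v y ≠ 0 := by
      by_contra h; push_neg at h; exact hv0 (hnd v h)
    obtain ⟨y, hy⟩ := hy
    have hrange : LinearMap.range (B v) = ⊤ := by
      rcases Ideal.eq_bot_or_top (LinearMap.range (B v)) with h | h
      · exfalso
        apply hy
        have hm : B v y ∈ LinearMap.range (B v) := LinearMap.mem_range_self _ y
        rw [h] at hm
        simpa [hBapp] using hm
      · exact h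
    have h := LinearMap.finrank_range_add_finrank_ker (B v)
    rw [hrange, finrank_top, Module.finrank_self, hQ, ← hV] at h
    omega
  set vv : ↥V := ⟨v, hvV⟩ with hvv
  have hvv0 : vv ≠ 0 := fun h => hv0 (by simpa [hvv] using congrArg Subtype.val h)
  set Z : Submodule (ZMod 2) ↥V := Submodule.span (ZMod 2) {vv} with hZ
  have hZdim : finrank (ZMod 2) Z = 1 := finrank_span_singleton hvv0
  have hπsurj : Function.Surjective Z.mkQ := Submodule.mkQ_surjective Z
  have hmemZ : ∀ w : ↥V, w ∈ Z ↔ w = 0 ∨ w = vv := by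
    intro w
    rw [hZ, Submodule.mem_span_singleton]
    constructor
    · rintro ⟨a, rfl⟩
      rcases z2 a with rfl | rfl
      · left; simp
      · right; simp
    · rintro (rfl | rfl)
      · exact ⟨0, by simp⟩
      · exact ⟨1, by simp⟩
  have hπeq : ∀ x y : ↥V, Z.mkQ x = Z.mkQ y ↔ (x - y = 0 ∨ x - y = vv) := by
    intro x y
    rw [Submodule.mkQ_apply, Submodule.mkQ_apply, Submodule.Quotient.eq, hmemZ]
  have hπeq' : ∀ x y : ↥V, (x : Q) = (y : Q) + v → Z.mkQ x = Z.mkQ y := by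
    intro x y hxy
    rw [hπeq]
    right
    ext
    push_cast
    rw [hxy]; abel
  have qinv : ∀ x y : ↥V, Z.mkQ x = Z.mkQ y → q x = q y := by
    intro x y h
    rcases (hπeq x y).mp h with h' | h'
    · rw [sub_eq_zero.mp h']
    · have hxy : (x : Q) = (y : Q) + v := by
        have h2 := congrArg Subtype.val h'
        push_cast at h2
        exact sub_eq_iff_eq_add'.mp h2
      rw [hxy]
      have h3 := hb (y : Q) v
      have hbyv : b (y : Q) v = 0 := by rw [hsym]; exact (hmemV _).mp y.2
      rw [hbyv, hqv] at h3
      linear_combination -h3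
  set g := Function.surjInv hπsurj with hg
  have hgπ : ∀ xq, Z.mkQ (g xq) = xq := fun xq => Function.surjInv_eq hπsurj xq
  set qbar : (↥V ⧸ Z) → ZMod 2 := fun xq => q ((g xq : ↥V) : Q) with hqbarDef
  have hqbar : ∀ x : ↥V, qbar (Z.mkQ x) = q (x : Q) := fun x => qinv _ _ (hgπ (Z.mkQ x))
  set bbar : (↥V ⧸ Z) → (↥V ⧸ Z) → ZMod 2 :=
    fun xq yq => qbar (xq + yq) - qbar xq - qbar yq with hbbarDef
  have hbbar : ∀ x y : ↥V, bbar (Z.mkQ x) (Z.mkQ y) = b (x : Q) (y : Q) := by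
    intro x y
    show qbar (Z.mkQ x + Z.mkQ y) - qbar (Z.mkQ x) - qbar (Z.mkQ y) = _
    rw [← map_add, hqbar, hqbar, hqbar, hb]
    push_cast
    ring
  have Hbl : ∀ x₁ x₂ y, bbar (x₁ + x₂) y = bbar x₁ y + bbar x₂ y := by
    intro x₁ x₂ y
    obtain ⟨x₁, rfl⟩ := hπsurj x₁
    obtain ⟨x₂, rfl⟩ := hπsurj x₂
    obtain ⟨y, rfl⟩ := hπsurj y
    rw [← map_add, hbbar, hbbar, hbbar, Submodule.coe_add, hbl]
  have Hbr : ∀ x y₁ y₂, bbar x (y₁ + y₂) = bbar x y₁ + bbar x y₂ := by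
    intro x y₁ y₂
    obtain ⟨x, rfl⟩ := hπsurj x
    obtain ⟨y₁, rfl⟩ := hπsurj y₁
    obtain ⟨y₂, rfl⟩ := hπsurj y₂
    rw [← map_add, hbbar, hbbar, hbbar, Submodule.coe_add, hbr]
  have Halt : ∀ x, bbar x x = 0 := by
    intro x
    obtain ⟨x, rfl⟩ := hπsurj x
    rw [hbbar]; exact halt _
  have Hnd : ∀ xq, (∀ yq, bbar xq yq = 0) → xq = 0 := by
    intro xq hxq
    obtain ⟨x, rfl⟩ := hπsurj xq
    have hxall : ∀ y : ↥V, b (x : Q) y = 0 := fun y => by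
      rw [← hbbar]; exact hxq (Z.mkQ y)
    have hVN : B.orthogonal (Submodule.span (ZMod 2) {v}) = V := by
      ext z
      rw [LinearMap.BilinForm.mem_orthogonal_iff, hmemV]
      constructor
      · intro h
        have := h v (Submodule.mem_span_singleton_self v)
        rw [hBapp] at this
        exact this
      · intro h n hn
        obtain ⟨a, rfl⟩ := Submodule.mem_span_singleton.mp hn
        rw [map_smul, LinearMap.smul_apply, hBapp, h, smul_zero]
    have hxN : (x : Q) ∈ Submodule.span (ZMod 2) {v} := by
      rw [← LinearMap.BilinForm.orthogonal_orthogonal hBnd hrefl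
        (Submodule.span (ZMod 2) {v}), hVN, LinearMap.BilinForm.mem_orthogonal_iff]
      intro z hz
      rw [hBapp, hsym]
      exact hxall ⟨z, hz⟩
    obtain ⟨a, ha⟩ := Submodule.mem_span_singleton.mp hxN
    have hxZ : x ∈ Z := by
      rw [hmemZ]
      rcases z2 a with rfl | rfl
      · left; ext; rw [← ha]; simp
      · right; ext; rw [← ha]; simp [hvv]
    rw [Submodule.mkQ_apply, Submodule.Quotient.mk_eq_zero]
    exact hxZ
  have hQbarDim : finrank (ZMod 2) (↥V ⧸ Z) = 2 * k := by
    have h := Submodule.finrank_quotient_add_finrank Z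
    rw [hZdim, hVdim] at h
    omega
  -- images of Lagrangians
  have hWbiso : ∀ W : Submodule (ZMod 2) Q, (∀ x ∈ W, q x = 0) →
      ∀ xq ∈ (W.comap V.subtype).map Z.mkQ, qbar xq = 0 := by
    intro W hW xq hxq
    obtain ⟨x, hx, rfl⟩ := Submodule.mem_map.mp hxq
    exact (hqbar x).trans (hW _ hx)
  have hdimWb : ∀ W : Submodule (ZMod 2) Q, v ∈ W →
      finrank (ZMod 2) ((W.comap V.subtype).map Z.mkQ) + 1 = finrank (ZMod 2) ↥(V ⊓ W) := by
    intro W hvW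
    have h := finrank_map_mkQ V Z (W.comap V.subtype)
    have hZle : (W.comap V.subtype) ⊓ Z = Z := by
      rw [inf_eq_right, hZ, Submodule.span_le, Set.singleton_subset_iff]
      exact hvW
    rw [hZle, hZdim, finrank_comap_subtype] at h
    exact h
  have hdimWb0 : ∀ W : Submodule (ZMod 2) Q, v ∉ W →
      finrank (ZMod 2) ((W.comap V.subtype).map Z.mkQ) = finrank (ZMod 2) ↥(V ⊓ W) := by
    intro W hvW
    have h := finrank_map_mkQ V Z (W.comap V.subtype)
    have hZbot : (W.comap V.subtype) ⊓ Z = ⊥ := by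
      rw [eq_bot_iff]
      rintro w ⟨hw1, hw2⟩
      rcases (hmemZ w).mp hw2 with rfl | rfl
      · simp
      · exact absurd hw1 hvW
    rw [hZbot, finrank_bot, add_zero, finrank_comap_subtype] at h
    exact h
  have hleV : ∀ W : Submodule (ZMod 2) Q, B.orthogonal W = W → v ∈ W → W ≤ V := by
    intro W horth hvW x hx
    rw [hmemV, hsym]
    rw [← horth, LinearMap.BilinForm.mem_orthogonal_iff] at hvW
    have := hvW x hx
    rw [hBapp] at this
    exact this
  have hbarDim : ∀ W : Submodule (ZMod 2) Q, B.orthogonal W = W →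
      finrank (ZMod 2) W = k + 1 → v ∈ W →
      finrank (ZMod 2) ((W.comap V.subtype).map Z.mkQ) = k := by
    intro W horth hWdim hvW
    have h := hdimWb W hvW
    rw [inf_eq_right.mpr (hleV W horth hvW), hWdim] at h
    omega
  have hbarInfDim : ∀ W₁ W₂ : Submodule (ZMod 2) Q, v ∈ W₁ → v ∈ W₂ → W₁ ≤ V →
      finrank (ZMod 2) ↥((W₁.comap V.subtype).map Z.mkQ ⊓ (W₂.comap V.subtype).map Z.mkQ) + 1
        = finrank (ZMod 2) ↥(W₁ ⊓ W₂) := by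
    intro W₁ W₂ hv1 hv2 hW1V
    have hbarInf : (W₁.comap V.subtype).map Z.mkQ ⊓ (W₂.comap V.subtype).map Z.mkQ
        = ((W₁ ⊓ W₂).comap V.subtype).map Z.mkQ := by
      apply le_antisymm
      · rintro xq ⟨h1, h2⟩
        obtain ⟨x, hx, rfl⟩ := Submodule.mem_map.mp h1
        obtain ⟨y, hy, hyx⟩ := Submodule.mem_map.mp h2
        have hxW2 : (x : Q) ∈ W₂ := by
          rcases (hπeq y x).mp hyx with h' | h'
          · have hyx2 : (y : Q) = (x : Q) := by
              have := sub_eq_zero.mp h'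
              exact_mod_cast congrArg Subtype.val this
            rwa [← hyx2]
          · have h2 := congrArg Subtype.val h'
            push_cast at h2
            have : (x : Q) = (y : Q) - v := by
              rw [← (show (y : Q) - x = v from h2)]; abel
            rw [this]
            exact W₂.sub_mem hy hv2
        exact Submodule.mem_map_of_mem (Submodule.mem_comap.mpr ⟨hx, hxW2⟩)
      · exact le_inf (Submodule.map_mono (Submodule.comap_mono inf_le_left))
          (Submodule.map_mono (Submodule.comap_mono inf_le_right))
    rw [hbarInf]
    have h := hdimWb (W₁ ⊓ W₂) (Submodule.mem_inf.mpr ⟨hv1, hv2⟩)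
    rw [inf_eq_right.mpr (le_trans inf_le_left hW1V)] at h
    exact h
  have hbarInfMix : ∀ W₁ W₂ : Submodule (ZMod 2) Q, v ∈ W₁ → W₁ ≤ V → v ∉ W₂ →
      finrank (ZMod 2) ↥((W₁.comap V.subtype).map Z.mkQ ⊓ (W₂.comap V.subtype).map Z.mkQ)
        = finrank (ZMod 2) ↥(W₁ ⊓ W₂) := by
    intro W₁ W₂ hv1 hW1V hv2
    have hvN : v ∈ Submodule.span (ZMod 2) {v} := Submodule.mem_span_singleton_self v
    have hNV : Submodule.span (ZMod 2) {v} ≤ V := by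
      rw [Submodule.span_le, Set.singleton_subset_iff]; exact hvV
    set T := (W₁ ⊓ W₂) ⊔ Submodule.span (ZMod 2) {v} with hT
    have hstep : (W₁.comap V.subtype).map Z.mkQ ⊓ (W₂.comap V.subtype).map Z.mkQ
        = (T.comap V.subtype).map Z.mkQ := by
      apply le_antisymm
      · rintro xq ⟨h1, h2⟩
        obtain ⟨x, hx, rfl⟩ := Submodule.mem_map.mp h1
        obtain ⟨y, hy, hyx⟩ := Submodule.mem_map.mp h2
        have hxT : (x : Q) ∈ T := by
          rcases (hπeq y x).mp hyx with h' | h'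
          · have hyx2 : (y : Q) = (x : Q) := by
              have := sub_eq_zero.mp h'
              exact_mod_cast congrArg Subtype.val this
            apply Submodule.mem_sup_left
            exact Submodule.mem_inf.mpr ⟨hx, hyx2 ▸ hy⟩
          · have h2c := congrArg Subtype.val h'
            push_cast at h2c
            have hyx : (y : Q) = (x : Q) + v := by rw [← (show (y : Q) - x = v from h2c)]; abel
            have hyQ : (y : Q) ∈ W₁ := by rw [hyx]; exact W₁.add_mem hx hv1
            have hxv : (x : Q) = (y : Q) - v := by rw [hyx]; abel
            rw [hxv]
            exact Submodule.sub_mem _ (Submodule.mem_sup_left (Submodule.mem_inf.mpr ⟨hyQ, hy⟩))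
              (Submodule.mem_sup_right hvN)
        exact Submodule.mem_map_of_mem (Submodule.mem_comap.mpr hxT)
      · rintro xq hxq
        obtain ⟨x, hx, rfl⟩ := Submodule.mem_map.mp hxq
        obtain ⟨w, hw, z, hz, hwz⟩ := Submodule.mem_sup.mp (Submodule.mem_comap.mp hx)
        rw [Submodule.subtype_apply] at hwz
        obtain ⟨a, rfl⟩ := Submodule.mem_span_singleton.mp hz
        have hw1 : w ∈ W₁ := (Submodule.mem_inf.mp hw).1
        have hw2 : w ∈ W₂ := (Submodule.mem_inf.mp hw).2
        have hwV : w ∈ V := hW1V hw1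
        constructor
        · apply Submodule.mem_map_of_mem
          show (x : Q) ∈ W₁
          rw [← hwz]
          exact W₁.add_mem hw1 (Submodule.smul_mem _ a hv1)
        · refine Submodule.mem_map.mpr ⟨⟨w, hwV⟩, hw2, ?_⟩
          rcases z2 a with rfl | rfl
          · have : (⟨w, hwV⟩ : ↥V) = x := by
              ext; rw [← hwz]; simp
            rw [this]
          · have : (x : Q) = ((⟨w, hwV⟩ : ↥V) : Q) + v := by
              rw [← hwz]; simp
            exact (hπeq' x ⟨w, hwV⟩ this).symm
    rw [hstep]
    have hTdim : finrank (ZMod 2) T = finrank (ZMod 2) ↥(W₁ ⊓ W₂) + 1 := by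
      have h := Submodule.finrank_sup_add_finrank_inf_eq (W₁ ⊓ W₂) (Submodule.span (ZMod 2) {v})
      have hbot : (W₁ ⊓ W₂) ⊓ Submodule.span (ZMod 2) {v} = ⊥ := by
        rw [eq_bot_iff]
        rintro x ⟨hx1, hx2⟩
        obtain ⟨a, rfl⟩ := Submodule.mem_span_singleton.mp hx2
        rcases z2 a with rfl | rfl
        · simp
        · exfalso
          apply hv2
          have := (Submodule.mem_inf.mp hx1).2
          simpa using this
      rw [hbot, finrank_bot, add_zero, finrank_span_singleton hv0] at h
      rw [← hT] at h
      omega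
    have h := hdimWb T (Submodule.mem_sup_right hvN)
    have hTV : T ≤ V := sup_le (le_trans inf_le_left hW1V) hNV
    rw [inf_eq_right.mpr hTV, hTdim] at h
    omega
  have hUle : U ≤ V := hleV U horthU hvU
  have hU'le : U' ≤ V := hleV U' horthU' hvU'
  have h01 := hbarInfDim U U' hvU hvU' hUle
  have hUbar := hbarDim U horthU hU2 hvU
  have hU'bar := hbarDim U' horthU' hU'2 hvU'
  by_cases hv'' : v ∈ U''
  · have h12 := hbarInfDim U' U'' hvU' hv'' hU'le
    have h20 := hbarInfDim U'' U hv'' hvU (hleV U'' horthU'' hv'')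
    have hU''bar := hbarDim U'' horthU'' hU''2 hv''
    have hmain := IH qbar bbar (fun _ _ => rfl) Hbl Hbr Halt Hnd hQbarDim
      ((U.comap V.subtype).map Z.mkQ) ((U'.comap V.subtype).map Z.mkQ)
      ((U''.comap V.subtype).map Z.mkQ)
      (hWbiso U hU1) hUbar (hWbiso U' hU'1) hU'bar (hWbiso U'' hU''1) hU''bar
    omega
  · have h12 := hbarInfMix U' U'' hvU' hU'le hv''
    have h20' := hbarInfMix U U'' hvU hUle hv''
    have h20 : finrank (ZMod 2) ↥((U''.comap V.subtype).map Z.mkQ ⊓ (U.comap V.subtype).map Z.mkQ)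
        = finrank (ZMod 2) ↥(U'' ⊓ U) := by
      rw [inf_comm ((U''.comap V.subtype).map Z.mkQ), inf_comm U'']
      exact h20'
    have hU''V : finrank (ZMod 2) ↥(V ⊓ U'') = k := by
      have hf : ∃ w : ↥U'', (B v) (U''.subtype w) ≠ 0 := by
        by_contra h
        push_neg at h
        apply hv''
        rw [← horthU'', LinearMap.BilinForm.mem_orthogonal_iff]
        intro n hn
        rw [hBapp, hsym]
        have := h ⟨n, hn⟩
        rwa [hBapp] at this
      obtain ⟨w, hw⟩ := hf
      set f := (B v) ∘ₗ U''.subtype with hf'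
      have hrange : LinearMap.range f = ⊤ := by
        rcases Ideal.eq_bot_or_top (LinearMap.range f) with h | h
        · exfalso
          apply hw
          have hm : f w ∈ LinearMap.range f := LinearMap.mem_range_self _ w
          rw [h] at hm
          simpa [hf'] using hm
        · exact h
      have h := LinearMap.finrank_range_add_finrank_ker f
      rw [hrange, finrank_top, Module.finrank_self, hU''2] at h
      have hker : LinearMap.ker f = V.comap U''.subtype := by
        rw [hf', LinearMap.ker_comp, hV]
      rw [hker, finrank_comap_subtype, inf_comm] at h
      omega
    have hU''bar : finrank (ZMod 2) ((U''.comap V.subtype).map Z.mkQ) = k := by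
      rw [hdimWb0 U'' hv'', hU''V]
    have hmain := IH qbar bbar (fun _ _ => rfl) Hbl Hbr Halt Hnd hQbarDim
      ((U.comap V.subtype).map Z.mkQ) ((U'.comap V.subtype).map Z.mkQ)
      ((U''.comap V.subtype).map Z.mkQ)
      (hWbiso U hU1) hUbar (hWbiso U' hU'1) hU'bar (hWbiso U'' hU''1) hU''bar
    omega

lemma aux : ∀ m : ℕ, P.{u} m := by
  intro m
  induction m using Nat.strong_induction_on with
  | _ m IHm =>
  intro Q _ _ _ q b hb hbl hbr halt hnd hQ U U' U'' hU1 hU2 hU'1 hU'2 hU''1 hU''2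
  by_cases hex : ∃ v : Q, v ≠ 0 ∧ (v ∈ U ⊓ U' ∨ v ∈ U' ⊓ U'' ∨ v ∈ U'' ⊓ U)
  · obtain ⟨v, hv0, hcase⟩ := hex
    have hm : m ≠ 0 := by
      rintro rfl
      have hb1 : U = ⊥ := Submodule.finrank_eq_zero.mp hU2
      have hb2 : U' = ⊥ := Submodule.finrank_eq_zero.mp hU'2
      have hb3 : U'' = ⊥ := Submodule.finrank_eq_zero.mp hU''2
      rcases hcase with h | h | h <;>
        simp only [hb1, hb2, hb3, inf_idem, Submodule.mem_bot] at h <;> exact hv0 h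
    obtain ⟨k, rfl⟩ : ∃ k, m = k + 1 := ⟨m - 1, by omega⟩
    rcases hcase with h | h | h
    · exact key k (IHm k (by omega)) q b hb hbl hbr halt hnd hQ U U' U'' hU1 hU2 hU'1 hU'2
        hU''1 hU''2 v hv0 (Submodule.mem_inf.mp h).1 (Submodule.mem_inf.mp h).2
    · have := key k (IHm k (by omega)) q b hb hbl hbr halt hnd hQ U' U'' U hU'1 hU'2 hU''1 hU''2
        hU1 hU2 v hv0 (Submodule.mem_inf.mp h).1 (Submodule.mem_inf.mp h).2
      omega
    · have := key k (IHm k (by omega)) q b hb hbl hbr halt hnd hQ U'' U U' hU''1 hU''2 hU1 hU2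
        hU'1 hU'2 v hv0 (Submodule.mem_inf.mp h).1 (Submodule.mem_inf.mp h).2
      omega
  · have hUU' : U ⊓ U' = ⊥ := by
      rw [eq_bot_iff]
      intro x hx
      simp only [Submodule.mem_bot]
      by_contra hx0
      exact hex ⟨x, hx0, Or.inl hx⟩
    have hU'U'' : U' ⊓ U'' = ⊥ := by
      rw [eq_bot_iff]
      intro x hx
      simp only [Submodule.mem_bot]
      by_contra hx0
      exact hex ⟨x, hx0, Or.inr (Or.inl hx)⟩
    have hU''U : U'' ⊓ U = ⊥ := by
      rw [eq_bot_iff]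
      intro x hx
      simp only [Submodule.mem_bot]
      by_contra hx0
      exact hex ⟨x, hx0, Or.inr (Or.inr hx)⟩
    have hsym := b_symm b hbl hbr halt
    set B := mkB b hbl hbr with hB
    have hBapp : ∀ x y : Q, B x y = b x y := fun _ _ => rfl
    have hsup : U ⊔ U' = ⊤ := by
      apply Submodule.eq_top_of_finrank_eq
      have h := Submodule.finrank_sup_add_finrank_inf_eq U U'
      rw [hUU', finrank_bot, add_zero, hU2, hU'2] at h
      omega
    have hcompl : IsCompl U U' := ⟨disjoint_iff.mpr hUU', codisjoint_iff.mpr hsup⟩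
    set pr := Submodule.linearProjOfIsCompl U' U hcompl.symm with hpr
    have hprker : ∀ x : Q, pr x = 0 ↔ x ∈ U :=
      fun x => Submodule.linearProjOfIsCompl_apply_eq_zero_iff hcompl.symm
    have hprU' : ∀ x : ↥U', pr (x : Q) = x :=
      fun x => Submodule.linearProjOfIsCompl_apply_left hcompl.symm x
    set C := B.comp U''.subtype ((U'.subtype ∘ₗ pr) ∘ₗ U''.subtype) with hC
    have hCapp : ∀ x y : ↥U'', C x y = b (x : Q) ((pr (y : Q) : Q)) := by
      intro x y
      rw [hC, LinearMap.BilinForm.comp_apply]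
      rfl
    have hCalt : C.IsAlt := by
      intro x
      rw [hCapp]
      have hw : ((x : Q) - (pr (x : Q) : Q)) ∈ U := by
        rw [← hprker]
        rw [map_sub]
        rw [hprU' (pr (x : Q))]
        simp
      have hqx : q ((x : Q)) = 0 := hU''1 _ x.2
      have hqp : q ((pr (x : Q) : Q)) = 0 := hU'1 _ (pr (x : Q)).2
      have hqw : q ((x : Q) - (pr (x : Q) : Q)) = 0 := hU1 _ hw
      have hbwp : b ((x : Q) - (pr (x : Q) : Q)) ((pr (x : Q) : Q)) = 0 := by
        rw [hb]
        have : (x : Q) - (pr (x : Q) : Q) + (pr (x : Q) : Q) = (x : Q) := by abel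
        rw [this, hqx, hqw, hqp]
        ring
      have hfin : b (((x : Q) - (pr (x : Q) : Q)) + (pr (x : Q) : Q)) ((pr (x : Q) : Q)) = 0 := by
        rw [hbl, hbwp, halt, zero_add]
      rwa [sub_add_cancel] at hfin
    have hCnd : C.Nondegenerate := by
      apply (LinearMap.IsRefl.nondegenerate_iff_separatingLeft hCalt.isRefl).mpr
      intro x hx
      set φ := pr ∘ₗ U''.subtype with hφ
      have hφinj : Function.Injective φ := by
        rw [← LinearMap.ker_eq_bot]
        rw [eq_bot_iff]
        intro y hy
        have hy1 : pr (y : Q) = 0 := hy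
        have hyU : (y : Q) ∈ U := (hprker _).mp hy1
        have : (y : Q) ∈ U'' ⊓ U := Submodule.mem_inf.mpr ⟨y.2, hyU⟩
        rw [hU''U, Submodule.mem_bot] at this
        simp only [Submodule.mem_bot]
        exact Subtype.ext this
      have hφsurj : Function.Surjective φ :=
        (LinearMap.injective_iff_surjective_of_finrank_eq_finrank
          (hU''2.trans hU'2.symm)).mp hφinj
      have hxU' : ∀ z ∈ U', b (x : Q) z = 0 := by
        intro z hz
        obtain ⟨y, hy⟩ := hφsurj ⟨z, hz⟩
        have := hx y
        rw [hCapp] at this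
        have hyz : (pr (y : Q) : Q) = z := by
          rw [hφ] at hy
          have : pr ((y : Q)) = ⟨z, hz⟩ := hy
          rw [this]
        rwa [hyz] at this
      have hxU'' : ∀ z ∈ U'', b (x : Q) z = 0 := by
        intro z hz
        rw [hb, hU''1 _ (U''.add_mem x.2 hz), hU''1 _ x.2, hU''1 _ hz]
        ring
      have hsup' : U' ⊔ U'' = ⊤ := by
        apply Submodule.eq_top_of_finrank_eq
        have h := Submodule.finrank_sup_add_finrank_inf_eq U' U''
        rw [hU'U'', finrank_bot, add_zero, hU'2, hU''2] at h
        omega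
      have hx0 : (x : Q) = 0 := by
        apply hnd
        intro z
        have hz : z ∈ U' ⊔ U'' := by rw [hsup']; trivial
        obtain ⟨z', hz', z'', hz'', rfl⟩ := Submodule.mem_sup.mp hz
        rw [hbr, hxU' z' hz', hxU'' z'' hz'', add_zero]
      exact Subtype.ext hx0
    have hEven : Even m := alt_even m C hU''2 hCalt hCnd
    rw [hUU', hU'U'', hU''U, finrank_bot]
    rw [Nat.even_iff] at hEven
    omega

end S1

end Stmt1Development

open S1

/-- For a finite-dimensional metabolic quadratic space `(Q, q)` over F₂
(whose associated bilinear form is non-degenerate and alternating, and which admits a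
maximal isotropic subspace), and any three maximal isotropic subspaces `U, U', U''`,
one has `dim(U ∩ U') + dim(U' ∩ U'') + dim(U'' ∩ U) ≡ dim U (mod 2)`. -/
theorem stmt1 {Q : Type*} [AddCommGroup Q] [Module (ZMod 2) Q]
    [FiniteDimensional (ZMod 2) Q]
    (q : Q → ZMod 2) (b : Q → Q → ZMod 2)
    (hb : ∀ x y, b x y = q (x + y) - q x - q y)
    (hbl : ∀ x₁ x₂ y, b (x₁ + x₂) y = b x₁ y + b x₂ y)
    (hbr : ∀ x y₁ y₂, b x (y₁ + y₂) = b x y₁ + b x y₂)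
    (halt : ∀ x, b x x = 0)
    (hnd : ∀ x, (∀ y, b x y = 0) → x = 0)
    (hmetabolic : ∃ U₀ : Submodule (ZMod 2) Q,
      (∀ x ∈ U₀, q x = 0) ∧ 2 * finrank (ZMod 2) U₀ = finrank (ZMod 2) Q)
    (U U' U'' : Submodule (ZMod 2) Q)
    (hU : (∀ x ∈ U, q x = 0) ∧ 2 * finrank (ZMod 2) U = finrank (ZMod 2) Q)
    (hU' : (∀ x ∈ U', q x = 0) ∧ 2 * finrank (ZMod 2) U' = finrank (ZMod 2) Q)
    (hU'' : (∀ x ∈ U'', q x = 0) ∧ 2 * finrank (ZMod 2) U'' = finrank (ZMod 2) Q) :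
    finrank (ZMod 2) ↥(U ⊓ U') + finrank (ZMod 2) ↥(U' ⊓ U'') +
      finrank (ZMod 2) ↥(U'' ⊓ U) ≡ finrank (ZMod 2) U [MOD 2] := by
  have h1 := hU.2
  have h2 := hU'.2
  have h3 := hU''.2
  have hm2 : finrank (ZMod 2) U' = finrank (ZMod 2) U := by omega
  have hm3 : finrank (ZMod 2) U'' = finrank (ZMod 2) U := by omega
  have := aux (finrank (ZMod 2) U) q b hb hbl hbr halt hnd (by omega) U U' U''
    hU.1 rfl hU'.1 hm2 hU''.1 hm3
  exact this
end

section
/- Let G be a finite abelian 2-group equipped with a non-degenerate alternating bilinear pairing G × G → Q/Z. If we write G as a direct sum of cyclic groups ⊕_i Z/2^{n_i}, then for each n the number of indices i with n_i = n is even. In particular, the 2-rank of G (the dimension of G[2] over F_2) is even. -/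
open AddSubgroup


def torsEquiv {A B : Type*} [AddCommMonoid A] [AddCommMonoid B] (c : ℕ) (e : A ≃+ B) :
    {a : A // c • a = 0} ≃ {b : B // c • b = 0} where
  toFun a := ⟨e a, by rw [← map_nsmul, a.2, map_zero]⟩
  invFun b := ⟨e.symm b, by rw [← map_nsmul, b.2, map_zero]⟩
  left_inv a := by simp
  right_inv b := by simp

def torsPi {ι : Type*} (A : ι → Type*) [∀ i, AddCommMonoid (A i)] (c : ℕ) :
    {f : ∀ i, A i // c • f = 0} ≃ ∀ i, {a : A i // c • a = 0} where
  toFun f i := ⟨f.1 i, by have := congrFun (f.2) i; simpa using this⟩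
  invFun g := ⟨fun i => (g i).1, by funext i; simpa using (g i).2⟩
  left_inv f := rfl
  right_inv g := rfl

def torsProd {A B : Type*} [AddCommMonoid A] [AddCommMonoid B] (c : ℕ) :
    {x : A × B // c • x = 0} ≃ {a : A // c • a = 0} × {b : B // c • b = 0} where
  toFun x := ⟨⟨x.1.1, congrArg Prod.fst x.2⟩, ⟨x.1.2, congrArg Prod.snd x.2⟩⟩
  invFun y := ⟨(y.1.1, y.2.1), by ext <;> simp [y.1.2, y.2.2]⟩
  left_inv x := rfl
  right_inv y := rfl

lemma addCircle_exists_zsmul (k : ℕ) (a z : AddCircle (1:ℚ))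
    (ha : addOrderOf a = 2^k) (hz : (2^k : ℕ) • z = 0) : ∃ c : ℤ, z = c • a := by
  rcases Nat.eq_zero_or_pos k with rfl | hk
  · -- a has order 1, z killed by 1
    have ha0 : a = 0 := by rwa [pow_zero, AddMonoid.addOrderOf_eq_one_iff] at ha
    have hz0 : z = 0 := by simpa using hz
    exact ⟨0, by simp [ha0, hz0]⟩
  obtain ⟨ζ, rfl⟩ := QuotientAddGroup.mk_surjective z
  obtain ⟨α, rfl⟩ := QuotientAddGroup.mk_surjective a
  -- 2^k • ζ ∈ ℤ
  have hz' : ((( (2^k : ℕ) : ℚ) * ζ : ℚ) : AddCircle (1:ℚ)) = 0 := by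
    rw [← hz]; push_cast [← AddCircle.coe_nsmul]; norm_num [nsmul_eq_mul]
  obtain ⟨c, hc⟩ := (AddCircle.coe_eq_zero_iff _).mp hz'
  have ha' : (((2^k : ℚ) * α : ℚ) : AddCircle (1:ℚ)) = 0 := by
    have : ((2^k : ℕ)) • ((α : AddCircle (1:ℚ))) = 0 := by
      rw [← ha]; exact addOrderOf_nsmul_eq_zero _
    rw [← this]; push_cast [← AddCircle.coe_nsmul]; norm_num [nsmul_eq_mul]
  obtain ⟨d, hd⟩ := (AddCircle.coe_eq_zero_iff _).mp ha'
  simp only [zsmul_eq_mul, mul_one] at hc hd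
  push_cast at hc hd
  have h2kQ : ((2:ℚ)^k) ≠ 0 := by positivity
  -- d is odd
  have hdodd : ¬ (2 : ℤ) ∣ d := by
    rintro ⟨d', rfl⟩
    have hhalf : ((2:ℚ))^(k-1) * α = (d' : ℚ) := by
      have h2 : (2:ℚ) * ((2:ℚ)^(k-1) * α) = 2 * (d' : ℚ) := by
        rw [← mul_assoc, ← pow_succ']
        have : k - 1 + 1 = k := by omega
        rw [this]
        push_cast at hd ⊢
        linarith [hd]
      field_simp at h2
      linarith
    have hzero : ((2^(k-1) : ℕ)) • ((α : AddCircle (1:ℚ))) = 0 := by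
      have : (((2:ℚ)^(k-1) * α : ℚ) : AddCircle (1:ℚ)) = 0 := by
        rw [hhalf]
        exact (AddCircle.coe_eq_zero_iff _).mpr ⟨d', by simp⟩
      rw [← this]
      push_cast [← AddCircle.coe_nsmul]
      norm_num [nsmul_eq_mul]
    have hdvd := addOrderOf_dvd_of_nsmul_eq_zero hzero
    rw [ha] at hdvd
    have := (Nat.pow_dvd_pow_iff_le_right (by norm_num : 1 < 2)).mp hdvd
    omega
  have hcop : IsCoprime (d : ℤ) ((2:ℤ)^k) :=
    (((Int.prime_two.coprime_iff_not_dvd).mpr hdodd).pow_left).symm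
  obtain ⟨u, v, huv⟩ := hcop
  refine ⟨c * u, ?_⟩
  have huvQ : (u:ℚ) * d + v * 2^k = 1 := by exact_mod_cast congrArg (Int.cast : ℤ → ℚ) huv
  have key : ((((c*u : ℤ):ℚ) * α - ζ : ℚ) : AddCircle (1:ℚ)) = 0 := by
    refine (AddCircle.coe_eq_zero_iff _).mpr ⟨-(c*v), ?_⟩
    have hα : α = (d:ℚ) / 2^k := by field_simp; linarith
    have hζ : ζ = (c:ℚ) / 2^k := by field_simp; linarith
    rw [hα, hζ]
    push_cast
    field_simp
    ring_nf
    linear_combination (-(c:ℚ)) * huvQ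
  rw [QuotientAddGroup.mk_sub, sub_eq_zero] at key
  have : ((c*u : ℤ)) • ((α : AddCircle (1:ℚ))) = (((((c*u:ℤ):ℚ)) * α : ℚ) : AddCircle (1:ℚ)) := by
    push_cast [← AddCircle.coe_zsmul]
    norm_num [zsmul_eq_mul]
  rw [this]
  exact key.symm


lemma zmod_torsion_card (k m : ℕ) :
    Nat.card {z : ZMod (2^k) // (2^m : ℕ) • z = 0} = 2 ^ min k m := by
  have h2k : (2:ℕ)^k ≠ 0 := by positivity
  haveI : NeZero ((2:ℕ)^k) := ⟨h2k⟩
  set f : ZMod (2^k) →+ ZMod (2^k) := AddMonoidHom.mulLeft ((2^m : ℕ) : ZMod (2^k)) with hf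
  have hker : ∀ z : ZMod (2^k), z ∈ f.ker ↔ (2^m : ℕ) • z = 0 := by
    intro z
    simp [hf, AddMonoidHom.mem_ker, AddMonoidHom.mulLeft, nsmul_eq_mul]
  have hrange : f.range = AddSubgroup.zmultiples ((2^m : ℕ) : ZMod (2^k)) := by
    ext z
    constructor
    · rintro ⟨y, rfl⟩
      exact ⟨(y.val : ℤ), by simp [hf, AddMonoidHom.mulLeft, zsmul_eq_mul, mul_comm]⟩
    · rintro ⟨i, rfl⟩
      exact ⟨(i : ZMod (2^k)), by simp [hf, AddMonoidHom.mulLeft, zsmul_eq_mul, mul_comm]⟩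
  have hcard_range : Nat.card f.range = 2 ^ (k - min k m) := by
    rw [hrange, Nat.card_zmultiples, ZMod.addOrderOf_coe _ h2k]
    have : Nat.gcd (2^k) (2^m) = 2 ^ min k m := by
      rcases le_total k m with h | h
      · rw [min_eq_left h]; exact Nat.gcd_eq_left (pow_dvd_pow 2 h)
      · rw [min_eq_right h]; exact Nat.gcd_eq_right (pow_dvd_pow 2 h)
    rw [this, Nat.pow_div (by omega) (by norm_num)]
  have key : Nat.card (ZMod (2^k)) = Nat.card f.range * Nat.card f.ker := by
    rw [AddSubgroup.card_eq_card_quotient_mul_card_addSubgroup f.ker]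
    congr 1
    exact Nat.card_congr (QuotientAddGroup.quotientKerEquivRange f).toEquiv
  have hcard : Nat.card {z : ZMod (2^k) // (2^m : ℕ) • z = 0} = Nat.card f.ker := by
    apply Nat.card_congr
    exact Equiv.subtypeEquivRight (fun z => (hker z).symm)
  rw [hcard]
  have hz : Nat.card (ZMod (2^k)) = 2^k := Nat.card_zmod _
  rw [hz, hcard_range] at key
  have h1 : (2:ℕ) ^ (k - min k m) * 2 ^ min k m = 2 ^ k := by
    rw [← pow_add]; congr 1; omega
  have hpos : (0:ℕ) < 2 ^ (k - min k m) := by positivity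
  nlinarith [key, h1]

universe u

set_option maxHeartbeats 2000000 in
lemma core (N : ℕ) : ∀ (G : Type u) [AddCommGroup G] [Finite G],
    Nat.card G = N → (∃ n, Nat.card G = 2^n) →
    ∀ (p : G →+ G →+ AddCircle (1:ℚ)), (∀ x, p x x = 0) →
    (∀ x, (∀ y, p x y = 0) → x = 0) →
    ∀ m : ℕ, ∃ t : ℕ, Nat.card {g : G // (2^m : ℕ) • g = 0} = 4^t := by
  induction N using Nat.strong_induction_on with
  | _ N IH =>
  intro G _ _ hN h2 p halt hnd m
  have skew : ∀ x y : G, p y x = - p x y := by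
    intro x y
    have h := halt (x + y)
    simp only [map_add, AddMonoidHom.add_apply, halt] at h
    have h2' : p x y + p y x = 0 := by
      rw [← h]; abel
    rw [eq_neg_iff_add_eq_zero, add_comm]
    exact h2'
  rcases subsingleton_or_nontrivial G with hsub | hnt
  · refine ⟨0, ?_⟩
    have : Subsingleton {g : G // (2^m : ℕ) • g = 0} := ⟨fun a b => Subtype.ext (Subsingleton.elim _ _)⟩
    have hne : Nonempty {g : G // (2^m : ℕ) • g = 0} := ⟨⟨0, by simp⟩⟩
    simp only [pow_zero, Nat.card_eq_one_iff_unique]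
    exact ⟨⟨fun a b => Subtype.ext (Subsingleton.elim _ _)⟩, hne⟩
  obtain ⟨n, hn⟩ := h2
  -- exponent is 2^k with k ≥ 1
  have hexpdvd : AddMonoid.exponent G ∣ 2^n := by
    rw [← hn]; exact AddGroup.exponent_dvd_nat_card
  obtain ⟨k, hkn, hexp⟩ := (Nat.dvd_prime_pow Nat.prime_two).mp hexpdvd
  have hk1 : 1 ≤ k := by
    have := AddMonoid.one_lt_exponent (G := G)
    rw [hexp] at this
    by_contra hc
    interval_cases k <;> omega
  -- x of maximal order
  obtain ⟨x, hx⟩ := AddMonoid.exists_addOrderOf_eq_exponent (AddMonoid.ExponentExists.of_finite (G := G))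
  rw [hexp] at hx
  have hxne : (2^(k-1) : ℕ) • x ≠ 0 := by
    intro h
    have hdvd := addOrderOf_dvd_of_nsmul_eq_zero h
    rw [hx] at hdvd
    have := (Nat.pow_dvd_pow_iff_le_right (by norm_num : 1 < 2)).mp hdvd
    omega
  have : ¬ ∀ y, p ((2^(k-1) : ℕ) • x) y = 0 := fun h => hxne (hnd _ h)
  push_neg at this
  obtain ⟨y, hy⟩ := this
  set a := p x y with ha_def
  have ha_half : (2^(k-1) : ℕ) • a ≠ 0 := by
    intro h
    apply hy
    rw [map_nsmul]
    simpa using h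
  have hxk : (2^k : ℕ) • x = 0 := by
    rw [← hx]; exact addOrderOf_nsmul_eq_zero x
  have hyk : (2^k : ℕ) • y = 0 := by
    rw [← hexp]; exact AddMonoid.exponent_nsmul_eq_zero y
  have hak : (2^k : ℕ) • a = 0 := by
    rw [ha_def, ← map_nsmul, hyk, map_zero]
  have haord : addOrderOf a = 2^k := by
    have hdvd := addOrderOf_dvd_of_nsmul_eq_zero hak
    obtain ⟨j, hjk, hja⟩ := (Nat.dvd_prime_pow Nat.prime_two).mp hdvd
    have hjge : ¬ j ≤ k - 1 := by
      intro hle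
      exact ha_half ((addOrderOf_dvd_iff_nsmul_eq_zero).mp (hja ▸ pow_dvd_pow 2 hle))
    have : j = k := by omega
    rw [hja, this]
  -- the subgroup K
  set K : AddSubgroup G := (p.flip x).ker ⊓ (p.flip y).ker with hK
  have hKmem : ∀ g : G, g ∈ K ↔ p g x = 0 ∧ p g y = 0 := by
    intro g
    simp [hK, AddSubgroup.mem_inf, AddMonoidHom.mem_ker]
  have hxZ : (zmultiplesHom G x) (((2^k : ℕ) : ℤ)) = 0 := by
    rw [zmultiplesHom_apply, natCast_zsmul]; exact hxk
  have hyZ : (zmultiplesHom G y) (((2^k : ℕ) : ℤ)) = 0 := by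
    rw [zmultiplesHom_apply, natCast_zsmul]; exact hyk
  set φx : ZMod (2^k) →+ G := ZMod.lift (2^k) ⟨zmultiplesHom G x, hxZ⟩ with hφx
  set φy : ZMod (2^k) →+ G := ZMod.lift (2^k) ⟨zmultiplesHom G y, hyZ⟩ with hφy
  set ψ : (ZMod (2^k) × ZMod (2^k)) × K →+ G :=
    ((φx.comp (AddMonoidHom.fst _ _) + φy.comp (AddMonoidHom.snd _ _)).comp
      (AddMonoidHom.fst (ZMod (2^k) × ZMod (2^k)) K)) + (K.subtype.comp (AddMonoidHom.snd (ZMod (2^k) × ZMod (2^k)) K)) with hψdef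
  have hψ : ∀ (c d : ℤ) (g : K), ψ (((c : ZMod (2^k)), (d : ZMod (2^k))), g)
      = c • x + d • y + (g : G) := by
    intro c d g
    simp [hψdef, hφx, hφy, ZMod.lift_coe]
  have hinj : Function.Injective ψ := by
    rw [injective_iff_map_eq_zero]
    rintro ⟨⟨i, j⟩, g⟩ h0
    obtain ⟨c, rfl⟩ := ZMod.intCast_surjective i
    obtain ⟨d, rfl⟩ := ZMod.intCast_surjective j
    rw [hψ] at h0
    have hgK := (hKmem g).mp g.2
    have hpy : (0 : AddCircle (1:ℚ)) = c • a := by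
      have := congrArg (fun z => p z y) h0
      simpa [map_add, map_zsmul, halt, hgK.2, ha_def] using this.symm
    have hpx : (0 : AddCircle (1:ℚ)) = -(d • a) := by
      have := congrArg (fun z => p z x) h0
      simpa [map_add, map_zsmul, halt, hgK.1, skew x y, ha_def, smul_neg] using this.symm
    have hcdvd : ((2:ℤ)^k) ∣ c := by
      have : (addOrderOf a : ℤ) ∣ c := addOrderOf_dvd_iff_zsmul_eq_zero.mpr hpy.symm
      rw [haord] at this; exact_mod_cast this
    have hddvd : ((2:ℤ)^k) ∣ d := by
      have h0' : d • a = 0 := by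
        have := hpx.symm
        rwa [neg_eq_zero] at this
      have : (addOrderOf a : ℤ) ∣ d := addOrderOf_dvd_iff_zsmul_eq_zero.mpr h0'
      rw [haord] at this; exact_mod_cast this
    have hi0 : ((c : ZMod (2^k))) = 0 := by
      rw [ZMod.intCast_zmod_eq_zero_iff_dvd]
      exact_mod_cast hcdvd
    have hj0 : ((d : ZMod (2^k))) = 0 := by
      rw [ZMod.intCast_zmod_eq_zero_iff_dvd]
      exact_mod_cast hddvd
    have hcx : c • x = 0 := by
      obtain ⟨c', rfl⟩ := hcdvd
      rw [mul_comm, mul_smul]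
      have : ((2:ℤ)^k) • x = 0 := by
        have := hxk; rw [← natCast_zsmul] at this; exact_mod_cast this
      rw [this, smul_zero]
    have hdy : d • y = 0 := by
      obtain ⟨d', rfl⟩ := hddvd
      rw [mul_comm, mul_smul]
      have : ((2:ℤ)^k) • y = 0 := by
        have := hyk; rw [← natCast_zsmul] at this; exact_mod_cast this
      rw [this, smul_zero]
    have hg0 : (g : G) = 0 := by
      rw [hcx, hdy] at h0; simpa using h0
    refine Prod.ext (Prod.ext ?_ ?_) ?_ <;> simp [hi0, hj0]
    exact Subtype.ext hg0
  have hsurj : Function.Surjective ψ := by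
    intro g
    have hgx : (2^k : ℕ) • (p g x) = 0 := by
      rw [← map_nsmul (p g), hxk, map_zero]
    have hgy : (2^k : ℕ) • (p g y) = 0 := by
      rw [← map_nsmul (p g), hyk, map_zero]
    obtain ⟨α, hα⟩ := addCircle_exists_zsmul k a (p g y) haord hgy
    obtain ⟨β, hβ⟩ := addCircle_exists_zsmul k a (p g x) haord hgx
    have hmem : g - (α • x + (-β) • y) ∈ K := by
      rw [hKmem]
      constructor
      · have : p (g - (α • x + (-β) • y)) x
            = p g x - (α • (p x x) + (-β) • (p y x)) := by
          simp [map_sub, map_add, map_zsmul]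
        rw [this, halt, skew x y, hβ, ← ha_def]
        simp
      · have : p (g - (α • x + (-β) • y)) y
            = p g y - (α • (p x y) + (-β) • (p y y)) := by
          simp [map_sub, map_add, map_zsmul]
        rw [this, halt, hα, ← ha_def]
        simp
    refine ⟨(((α : ZMod (2^k)), ((-β : ℤ) : ZMod (2^k))), ⟨g - (α • x + (-β) • y), hmem⟩), ?_⟩
    rw [hψ]
    show α • x + (-β) • y + (g - (α • x + (-β) • y)) = g
    abel
  set e' : ((ZMod (2^k) × ZMod (2^k)) × K) ≃+ G := AddEquiv.ofBijective ψ ⟨hinj, hsurj⟩ with he'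
  have he'app : ∀ z, e' z = ψ z := fun z => rfl
  -- cardinalities
  have hcardG : Nat.card G = (2^k * 2^k) * Nat.card K := by
    rw [← Nat.card_congr e'.toEquiv, Nat.card_prod, Nat.card_prod, Nat.card_zmod]
  have hKpos : 0 < Nat.card K := Nat.card_pos
  have h4 : 4 ≤ 2^k * 2^k := by
    have h2 : 2 ≤ 2^k := by
      calc 2 = 2^1 := (pow_one 2).symm
      _ ≤ 2^k := Nat.pow_le_pow_right (by norm_num) hk1
    nlinarith
  have hKlt : Nat.card K < N := by
    rw [← hN, hcardG]; nlinarith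
  have hK2 : ∃ n', Nat.card K = 2^n' := by
    have hdvd : Nat.card K ∣ Nat.card G := AddSubgroup.card_addSubgroup_dvd_card K
    rw [hn] at hdvd
    obtain ⟨j, _, hj⟩ := (Nat.dvd_prime_pow Nat.prime_two).mp hdvd
    exact ⟨j, hj⟩
  -- induced pairing on K
  set q : K →+ K →+ AddCircle (1:ℚ) := ((p.comp K.subtype).flip.comp K.subtype).flip with hq
  have hqapp : ∀ u w : K, q u w = p (u : G) (w : G) := fun u w => rfl
  have qalt : ∀ u : K, q u u = 0 := fun u => by rw [hqapp]; exact halt _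
  have qnd : ∀ u : K, (∀ w : K, q u w = 0) → u = 0 := by
    intro u hu
    have hall : ∀ g : G, p (u : G) g = 0 := by
      intro g
      obtain ⟨⟨⟨i, j⟩, w⟩, rfl⟩ := hsurj g
      obtain ⟨c, rfl⟩ := ZMod.intCast_surjective i
      obtain ⟨d, rfl⟩ := ZMod.intCast_surjective j
      rw [hψ]
      have huK := (hKmem (u : G)).mp u.2
      have hw := hu w
      rw [hqapp] at hw
      simp [map_add, map_zsmul, huK.1, huK.2, hw]
    have := hnd _ hall
    exact Subtype.ext (by simpa using this)
  obtain ⟨t', ht'⟩ := IH (Nat.card K) hKlt K rfl hK2 q qalt qnd m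
  refine ⟨min k m + t', ?_⟩
  have step1 : Nat.card {g : G // (2^m : ℕ) • g = 0}
      = Nat.card {z : (ZMod (2^k) × ZMod (2^k)) × K // (2^m : ℕ) • z = 0} :=
    Nat.card_congr (torsEquiv _ e'.symm)
  have step2 : Nat.card {z : (ZMod (2^k) × ZMod (2^k)) × K // (2^m : ℕ) • z = 0}
      = Nat.card {z : (ZMod (2^k) × ZMod (2^k)) // (2^m : ℕ) • z = 0} * Nat.card {w : K // (2^m : ℕ) • w = 0} := by
    rw [Nat.card_congr (torsProd _), Nat.card_prod]
  have step3 : Nat.card {z : (ZMod (2^k) × ZMod (2^k)) // (2^m : ℕ) • z = 0} = 2^(min k m) * 2^(min k m) := by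
    rw [Nat.card_congr (torsProd _), Nat.card_prod, zmod_torsion_card]
  rw [step1, step2, step3, ht']
  have : (4:ℕ)^(min k m) = 2^(min k m) * 2^(min k m) := by
    rw [show (4:ℕ) = 2*2 by norm_num, mul_pow]
  rw [pow_add, this]

/-- A finite abelian 2-group `G` with a non-degenerate alternating
bilinear pairing `G × G → ℚ/ℤ`: in any decomposition `G ≅ ⊕ᵢ ℤ/2^{nᵢ}` into
(nontrivial) cyclic groups, for each `m` the number of indices `i` with `nᵢ = m`
is even; in particular the 2-rank of `G` is even. -/
theorem stmt2 {G : Type*} [AddCommGroup G] [Fintype G]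
    (h2grp : ∃ n : ℕ, Fintype.card G = 2 ^ n)
    (p : G →+ G →+ AddCircle (1 : ℚ))
    (halt : ∀ x : G, p x x = 0)
    (hnd : ∀ x : G, (∀ y : G, p x y = 0) → x = 0)
    {ι : Type*} [Fintype ι] [DecidableEq ι]
    (n : ι → ℕ) (hpos : ∀ i, 0 < n i)
    (e : G ≃+ ∀ i, ZMod (2 ^ n i)) :
    (∀ m : ℕ, Even ((Finset.univ.filter fun i => n i = m).card)) ∧
      Even (Fintype.card ι) := by
  have h2 : ∃ nn, Nat.card G = 2 ^ nn := by
    obtain ⟨nn, hnn⟩ := h2grp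
    exact ⟨nn, by rw [Nat.card_eq_fintype_card]; exact hnn⟩
  -- the torsion counts are powers of 4
  have hS : ∀ m : ℕ, Even (∑ i, min (n i) m) := by
    intro m
    obtain ⟨t, ht⟩ := core (Nat.card G) G rfl h2 p halt hnd m
    have hcount : Nat.card {g : G // (2^m : ℕ) • g = 0} = 2 ^ (∑ i, min (n i) m) := by
      rw [Nat.card_congr (torsEquiv _ e), Nat.card_congr (torsPi _ _),
        Nat.card_pi]
      have : ∀ i : ι, Nat.card {z : ZMod (2 ^ n i) // (2^m : ℕ) • z = 0}
          = 2 ^ min (n i) m := fun i => zmod_torsion_card (n i) m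
      rw [Finset.prod_congr rfl (fun i _ => this i), Finset.prod_pow_eq_pow_sum]
    rw [ht] at hcount
    have h4 : (4:ℕ) ^ t = 2 ^ (2 * t) := by rw [pow_mul]; norm_num
    rw [h4] at hcount
    have := Nat.pow_right_injective (le_refl 2) hcount
    exact ⟨t, by omega⟩
  constructor
  · intro m
    rcases Nat.eq_zero_or_pos m with rfl | hm
    · have : (Finset.univ.filter fun i => n i = 0) = ∅ := by
        apply Finset.filter_false_of_mem
        intro i _
        have := hpos i; omega
      rw [this]
      simp
    · have key : (Finset.univ.filter fun i => n i = m).card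
          + (∑ i, min (n i) (m-1)) + (∑ i, min (n i) (m+1))
          = 2 * ∑ i, min (n i) m := by
        rw [Finset.card_filter]
        rw [Finset.mul_sum, ← Finset.sum_add_distrib, ← Finset.sum_add_distrib]
        apply Finset.sum_congr rfl
        intro i _
        rcases eq_or_ne (n i) m with h | h
        · rw [if_pos h]; omega
        · rw [if_neg h]; omega
      obtain ⟨s1, hs1⟩ := hS (m-1)
      obtain ⟨s2, hs2⟩ := hS (m+1)
      obtain ⟨s3, hs3⟩ := hS m
      rw [Nat.even_iff]
      omega
  · have h1 : (∑ i, min (n i) 1) = Fintype.card ι := by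
      rw [Fintype.card]
      rw [Finset.card_eq_sum_ones]
      apply Finset.sum_congr rfl
      intro i _
      have := hpos i
      omega
    have := hS 1
    rwa [h1] at this
end
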